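/- A Markov transition semigroup {P_t}_{t≥0} on a Hilbert space E is strong Feller provided that for every function φ: E → ℝ with ‖φ‖_∞ := sup_{x∈E}|φ(x)| and ‖∇φ‖_∞ finite, one has ‖∇P_tφ(x)‖ ≤ C(‖x‖)‖φ‖_∞ for all x ∈ E, where C: ℝ⁺ → ℝ is a fixed nondecreasing function. -/

import Mathlib

/-!
STATEMENT 13 (criterion for the strong Feller property,
cf. Da Prato–Zabczyk, Lemma 7.1.5).  A Markov transition semigroup
`{P_t}` on a Hilbert space `E` is modelled as a family of Markov kernels
satisfying the Chapman–Kolmogorov property, acting on bounded Borel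
functions by `(P_t φ)(x) = ∫ φ(y) (P_t)(x, dy)`.
-/

open MeasureTheory ProbabilityTheory Filter Metric Topology
open scoped ENNReal RealInnerProductSpace

/-- The sup-norm `‖φ‖_∞ = sup_x |φ x|` of a function `φ : E → ℝ`. -/
noncomputable def supNorm {E : Type*} (φ : E → ℝ) : ℝ := ⨆ x, |φ x|

namespace StrongFellerAux

variable {E : Type*} [NormedAddCommGroup E] [InnerProductSpace ℝ E]

/-- `cf F z = sup_{y ∈ F} (⟪z,y⟫ - ‖y‖²/2) = (‖z‖² - d(z,F)²)/2`. -/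
noncomputable def cf (F : Set E) (z : E) : ℝ :=
  ⨆ y : F, (⟪z, (y : E)⟫ - ‖(y : E)‖ ^ 2 / 2)

lemma cf_bddAbove (F : Set E) (z : E) :
    BddAbove (Set.range fun y : F => ⟪z, (y : E)⟫ - ‖(y : E)‖ ^ 2 / 2) := by
  refine ⟨‖z‖ ^ 2 / 2, ?_⟩
  rintro r ⟨y, rfl⟩
  have h1 : ⟪z, (y : E)⟫ ≤ ‖z‖ * ‖(y : E)‖ := real_inner_le_norm _ _
  nlinarith [sq_nonneg (‖z‖ - ‖(y : E)‖)]

lemma le_cf {F : Set E} {y : E} (hy : y ∈ F) (z : E) :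
    ⟪z, y⟫ - ‖y‖ ^ 2 / 2 ≤ cf F z :=
  le_ciSup (cf_bddAbove F z) (⟨y, hy⟩ : F)

lemma cf_le {F : Set E} (hF : F.Nonempty) {z : E} {b : ℝ}
    (h : ∀ y ∈ F, ⟪z, y⟫ - ‖y‖ ^ 2 / 2 ≤ b) : cf F z ≤ b := by
  have : Nonempty F := hF.to_subtype
  exact ciSup_le fun y => h y y.2

lemma inner_half_eq (z y : E) :
    ⟪z, y⟫ - ‖y‖ ^ 2 / 2 = (‖z‖ ^ 2 - ‖z - y‖ ^ 2) / 2 := by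
  have := norm_sub_sq_real z y
  linarith

lemma cf_eq {F : Set E} (hF : F.Nonempty) (z : E) :
    2 * cf F z = ‖z‖ ^ 2 - infDist z F ^ 2 := by
  have hd0 : 0 ≤ infDist z F := infDist_nonneg
  apply le_antisymm
  · have : cf F z ≤ (‖z‖ ^ 2 - infDist z F ^ 2) / 2 := by
      refine cf_le hF fun y hy => ?_
      rw [inner_half_eq]
      have h1 : infDist z F ≤ dist z y := infDist_le_dist_of_mem hy
      rw [dist_eq_norm] at h1
      nlinarith [norm_nonneg (z - y)]
    linarith
  · refine le_of_forall_pos_le_add fun η hη => ?_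
    set d := infDist z F with hd
    set δ : ℝ := min 1 (η / (2 * d + 2)) with hδdef
    have hδpos : 0 < δ := by
      apply lt_min one_pos
      positivity
    obtain ⟨y, hyF, hydist⟩ := (infDist_lt_iff hF).1 (by linarith : infDist z F < d + δ)
    have h2 : ⟪z, y⟫ - ‖y‖ ^ 2 / 2 ≤ cf F z := le_cf hyF z
    rw [inner_half_eq] at h2
    rw [dist_eq_norm] at hydist
    have hδ1 : δ ≤ 1 := min_le_left _ _
    have hδ2 : δ ≤ η / (2 * d + 2) := min_le_right _ _
    have hδ3 : δ * (2 * d + 2) ≤ η := by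
      exact (le_div_iff₀ (by positivity)).1 hδ2
    have hn : ‖z - y‖ ^ 2 ≤ (d + δ) ^ 2 := by
      have := norm_nonneg (z - y)
      nlinarith
    nlinarith


section Min
variable [CompleteSpace E] {F : Set E}

/-- The function minimized in the Moreau–Fenchel construction. -/
noncomputable def Hf (F : Set E) (p z : E) : ℝ := ‖z‖ ^ 2 + 2 * cf F z - ⟪p, z⟫

lemma Hf_midpoint (hF : F.Nonempty) (p z₁ z₂ : E) :
    Hf F p ((2:ℝ)⁻¹ • (z₁ + z₂)) ≤ (Hf F p z₁ + Hf F p z₂) / 2 - 4⁻¹ * ‖z₁ - z₂‖ ^ 2 := by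
  have hnorm : ‖(2:ℝ)⁻¹ • (z₁ + z₂)‖ ^ 2
      = (‖z₁‖ ^ 2 + ‖z₂‖ ^ 2) / 2 - 4⁻¹ * ‖z₁ - z₂‖ ^ 2 := by
    have hpar := parallelogram_law_with_norm ℝ z₁ z₂
    have : ‖(2:ℝ)⁻¹ • (z₁ + z₂)‖ = (2:ℝ)⁻¹ * ‖z₁ + z₂‖ := by
      rw [norm_smul]; simp
    rw [this]
    nlinarith
  have hinner : ∀ q : E, ⟪q, (2:ℝ)⁻¹ • (z₁ + z₂)⟫ = (⟪q, z₁⟫ + ⟪q, z₂⟫) / 2 := by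
    intro q
    rw [inner_smul_right, inner_add_right]; ring
  have hcf : cf F ((2:ℝ)⁻¹ • (z₁ + z₂)) ≤ (cf F z₁ + cf F z₂) / 2 := by
    refine cf_le hF fun y hy => ?_
    have h1 := le_cf hy z₁
    have h2 := le_cf hy z₂
    have : ⟪(2:ℝ)⁻¹ • (z₁ + z₂), y⟫ = (⟪z₁, y⟫ + ⟪z₂, y⟫) / 2 := by
      rw [inner_smul_left, inner_add_left]; simp; ring
    rw [this]
    linarith
  have hip := hinner p
  unfold Hf
  rw [hip, hnorm]
  linarith

lemma exists_min (hF : F.Nonempty) (p : E) :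
    ∃ m : E, ∀ z : E, Hf F p m + 2⁻¹ * ‖z - m‖ ^ 2 ≤ Hf F p z := by
  obtain ⟨y₀, hy₀⟩ := hF
  -- lower bound
  have hlb : ∀ z : E, Hf F p z ≥ ‖z‖ ^ 2 - ‖(2:ℝ) • y₀ - p‖ * ‖z‖ - ‖y₀‖ ^ 2 := by
    intro z
    have h1 : ⟪z, y₀⟫ - ‖y₀‖ ^ 2 / 2 ≤ cf F z := le_cf hy₀ z
    have h2 : ⟪z, (2:ℝ) • y₀ - p⟫ ≥ -(‖(2:ℝ) • y₀ - p‖ * ‖z‖) := by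
      have := real_inner_le_norm z (-((2:ℝ) • y₀ - p))
      rw [inner_neg_right, norm_neg] at this
      linarith [this]
    have h3 : ⟪z, (2:ℝ) • y₀ - p⟫ = 2 * ⟪z, y₀⟫ - ⟪z, p⟫ := by
      rw [inner_sub_right, real_inner_smul_right]
    have h4 : ⟪p, z⟫ = ⟪z, p⟫ := real_inner_comm z p
    unfold Hf
    nlinarith
  have hbdd : BddBelow (Set.range (Hf F p)) := by
    refine ⟨-(‖(2:ℝ) • y₀ - p‖ ^ 2 / 4) - ‖y₀‖ ^ 2, ?_⟩
    rintro r ⟨z, rfl⟩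
    have := hlb z
    nlinarith [sq_nonneg (‖z‖ - ‖(2:ℝ) • y₀ - p‖ / 2)]
  set I : ℝ := sInf (Set.range (Hf F p)) with hI
  have hne : (Set.range (Hf F p)).Nonempty := ⟨_, ⟨y₀, rfl⟩⟩
  -- minimizing sequence
  have hseq : ∀ n : ℕ, ∃ z : E, Hf F p z < I + 1 / (n + 1) := by
    intro n
    obtain ⟨a, ⟨z, rfl⟩, ha⟩ := Real.lt_sInf_add_pos hne
      (by positivity : (0:ℝ) < 1 / (n + 1))
    exact ⟨z, ha⟩
  choose zs hzs using hseq
  have hIle : ∀ z : E, I ≤ Hf F p z := fun z => csInf_le hbdd ⟨z, rfl⟩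
  -- Cauchy
  have hdist : ∀ n m : ℕ, ‖zs n - zs m‖ ^ 2 < 2 * (1 / (n + 1) + 1 / (m + 1)) := by
    intro n m
    have hmid := Hf_midpoint ⟨y₀, hy₀⟩ p (zs n) (zs m)
    have h1 := hzs n
    have h2 := hzs m
    have h3 := hIle ((2:ℝ)⁻¹ • (zs n + zs m))
    linarith
  have hcauchy : CauchySeq zs := by
    rw [Metric.cauchySeq_iff]
    intro ε hε
    obtain ⟨N, hN⟩ := exists_nat_gt (4 / ε ^ 2)
    refine ⟨N, fun m hm n hn => ?_⟩
    have h4N : (4:ℝ) / (N + 1) < ε ^ 2 := by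
      rw [div_lt_iff₀ (by positivity)]
      rw [div_lt_iff₀ (by positivity)] at hN
      nlinarith [hε, hN]
    have hb : ∀ k : ℕ, N ≤ k → 1 / ((k:ℝ) + 1) ≤ 1 / ((N:ℝ) + 1) := by
      intro k hk
      apply one_div_le_one_div_of_le (by positivity)
      have : (N:ℝ) ≤ k := Nat.cast_le.2 hk
      linarith
    have h9 := hdist m n
    have h5 := hb m hm
    have h6 := hb n hn
    rw [dist_eq_norm]
    have h8 : (2:ℝ) * (1 / (↑m + 1) + 1 / (↑n + 1)) ≤ 4 / ((N:ℝ) + 1) := by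
      have h10 : (4:ℝ) / ((N:ℝ) + 1) = 2 * (1 / ((N:ℝ) + 1) + 1 / ((N:ℝ) + 1)) := by ring
      rw [h10]
      linarith
    have h7 : ‖zs m - zs n‖ ^ 2 < ε ^ 2 := by linarith
    exact lt_of_pow_lt_pow_left₀ 2 hε.le h7
  obtain ⟨m, hm⟩ := cauchySeq_tendsto_of_complete hcauchy
  refine ⟨m, fun z => ?_⟩
  -- H m ≤ I
  have hHmI : Hf F p m ≤ I := by
    have hy : ∀ y ∈ F, ‖m‖ ^ 2 + 2 * (⟪m, y⟫ - ‖y‖ ^ 2 / 2) - ⟪p, m⟫ ≤ I := by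
      intro y hy
      have hcont : Continuous fun z : E => ‖z‖ ^ 2 + 2 * (⟪z, y⟫ - ‖y‖ ^ 2 / 2) - ⟪p, z⟫ :=
        ((continuous_norm.pow 2).add
          (continuous_const.mul ((continuous_id.inner continuous_const).sub continuous_const))).sub
          (continuous_const.inner continuous_id)
      have htend := (hcont.tendsto m).comp hm
      have htendI : Tendsto (fun n : ℕ => I + 1 / ((n:ℝ) + 1)) atTop (𝓝 I) := by
        have := tendsto_one_div_add_atTop_nhds_zero_nat (𝕜 := ℝ)
        simpa using (tendsto_const_nhds (x := I)).add this
      refine le_of_tendsto_of_tendsto htend htendI ?_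
      filter_upwards with n
      have hle : ‖zs n‖ ^ 2 + 2 * (⟪zs n, y⟫ - ‖y‖ ^ 2 / 2) - ⟪p, zs n⟫ ≤ Hf F p (zs n) := by
        have := le_cf hy (zs n)
        unfold Hf
        linarith
      exact le_trans hle (hzs n).le
    have : cf F m ≤ (I - ‖m‖ ^ 2 + ⟪p, m⟫) / 2 := by
      refine cf_le ⟨y₀, hy₀⟩ fun y hyF => ?_
      have := hy y hyF
      linarith
    unfold Hf
    linarith
  have hmid := Hf_midpoint ⟨y₀, hy₀⟩ p m z
  have h3 := hIle ((2:ℝ)⁻¹ • (m + z))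
  rw [norm_sub_rev m z] at hmid
  linarith

end Min

section Urysohn
variable [CompleteSpace E] {F : Set E}

/-- The minimizer. -/
noncomputable def Mf (hF : F.Nonempty) (p : E) : E := (exists_min hF p).choose

lemma Mf_spec (hF : F.Nonempty) (p z : E) :
    Hf F p (Mf hF p) + 2⁻¹ * ‖z - Mf hF p‖ ^ 2 ≤ Hf F p z :=
  (exists_min hF p).choose_spec z

/-- The (shifted) Fenchel conjugate. -/
noncomputable def Phi (hF : F.Nonempty) (p : E) : ℝ := -Hf F p (Mf hF p)

lemma Phi_eq (hF : F.Nonempty) (p : E) :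
    Phi hF p = ⟪p, Mf hF p⟫ - ‖Mf hF p‖ ^ 2 - 2 * cf F (Mf hF p) := by
  unfold Phi Hf; ring

lemma Phi_ge (hF : F.Nonempty) (p z : E) :
    ⟪p, z⟫ - ‖z‖ ^ 2 - 2 * cf F z + 2⁻¹ * ‖z - Mf hF p‖ ^ 2 ≤ Phi hF p := by
  have := Mf_spec hF p z
  unfold Phi Hf at *
  linarith

lemma Mf_lip (hF : F.Nonempty) (p q : E) : ‖Mf hF p - Mf hF q‖ ≤ ‖p - q‖ := by
  have h1 := Mf_spec hF p (Mf hF q)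
  have h2 := Mf_spec hF q (Mf hF p)
  unfold Hf at h1 h2
  rw [norm_sub_rev (Mf hF q) (Mf hF p)] at h1
  have hsum : ‖Mf hF p - Mf hF q‖ ^ 2 ≤ ⟪p - q, Mf hF p - Mf hF q⟫ := by
    have e1 : ⟪p - q, Mf hF p - Mf hF q⟫
        = ⟪p, Mf hF p⟫ - ⟪p, Mf hF q⟫ - ⟪q, Mf hF p⟫ + ⟪q, Mf hF q⟫ := by
      rw [inner_sub_left, inner_sub_right, inner_sub_right]; ring
    linarith
  have hle : ⟪p - q, Mf hF p - Mf hF q⟫ ≤ ‖p - q‖ * ‖Mf hF p - Mf hF q‖ :=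
    real_inner_le_norm _ _
  rcases eq_or_lt_of_le (norm_nonneg (Mf hF p - Mf hF q)) with h | h
  · rw [← h]; exact norm_nonneg _
  · have h9 : ‖Mf hF p - Mf hF q‖ * ‖Mf hF p - Mf hF q‖ ≤ ‖p - q‖ * ‖Mf hF p - Mf hF q‖ := by
      nlinarith
    exact le_of_mul_le_mul_right h9 h

lemma hasFDerivAt_Phi (hF : F.Nonempty) (p : E) :
    HasFDerivAt (Phi hF) (innerSL ℝ (Mf hF p)) p := by
  have key : ∀ q : E, 0 ≤ Phi hF q - Phi hF p - ⟪Mf hF p, q - p⟫ ∧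
      Phi hF q - Phi hF p - ⟪Mf hF p, q - p⟫ ≤ ‖q - p‖ ^ 2 := by
    intro q
    have hcomm : ⟪Mf hF p, q - p⟫ = ⟪q - p, Mf hF p⟫ := real_inner_comm _ _
    constructor
    · have h1 := Phi_ge hF q (Mf hF p)
      have h2 := Phi_eq hF p
      have h3 : ⟪q, Mf hF p⟫ = ⟪p, Mf hF p⟫ + ⟪q - p, Mf hF p⟫ := by
        rw [inner_sub_left]; ring
      nlinarith [sq_nonneg ‖Mf hF p - Mf hF p‖, sq_nonneg ‖Mf hF q - Mf hF p‖,
        sq_nonneg ‖Mf hF p - Mf hF q‖]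
    · have h1 := Phi_ge hF p (Mf hF q)
      have h2 := Phi_eq hF q
      have h3 : ⟪p, Mf hF q⟫ = ⟪q, Mf hF q⟫ - ⟪q - p, Mf hF q⟫ := by
        rw [inner_sub_left]; ring
      have h4 : ⟪q - p, Mf hF q⟫ = ⟪q - p, Mf hF p⟫ + ⟪q - p, Mf hF q - Mf hF p⟫ := by
        rw [inner_sub_right]; ring
      have h5 : ⟪q - p, Mf hF q - Mf hF p⟫ ≤ ‖q - p‖ * ‖Mf hF q - Mf hF p‖ :=
        real_inner_le_norm _ _
      have h6 : ‖Mf hF q - Mf hF p‖ ≤ ‖q - p‖ := Mf_lip hF q p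
      have h7 : ‖q - p‖ * ‖Mf hF q - Mf hF p‖ ≤ ‖q - p‖ * ‖q - p‖ :=
        mul_le_mul_of_nonneg_left h6 (norm_nonneg _)
      nlinarith [sq_nonneg ‖Mf hF q - Mf hF q‖]
  rw [hasFDerivAt_iff_isLittleO_nhds_zero]
  rw [Asymptotics.isLittleO_iff]
  intro c hc
  rw [Metric.eventually_nhds_iff]
  refine ⟨c, hc, fun {v} hv => ?_⟩
  have h := key (p + v)
  have hsimp : p + v - p = v := by abel
  rw [hsimp] at h
  have habs : |Phi hF (p + v) - Phi hF p - ⟪Mf hF p, v⟫| ≤ ‖v‖ ^ 2 := by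
    rw [abs_le]
    constructor
    · nlinarith [h.1, sq_nonneg ‖v‖]
    · exact h.2
  have hdist : ‖v‖ < c := by simpa [dist_eq_norm] using hv
  calc ‖Phi hF (p + v) - Phi hF p - (innerSL ℝ (Mf hF p)) v‖
      = |Phi hF (p + v) - Phi hF p - ⟪Mf hF p, v⟫| := by
        simp [Real.norm_eq_abs, innerSL_apply_apply]
    _ ≤ ‖v‖ ^ 2 := habs
    _ = ‖v‖ * ‖v‖ := sq ‖v‖ ▸ by ring
    _ ≤ c * ‖v‖ := mul_le_mul_of_nonneg_right hdist.le (norm_nonneg _)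

/-- The `C¹` sup-convolution of the squared distance function to `F`. -/
noncomputable def wf (hF : F.Nonempty) (x : E) : ℝ := Phi hF ((4:ℝ) • x) - 2 * ‖x‖ ^ 2

lemma inner_four_smul (x : E) : ⟪(4:ℝ) • x, x⟫ = 4 * ‖x‖ ^ 2 := by
  rw [real_inner_smul_left, real_inner_self_eq_norm_sq]

lemma wf_ge (hF : F.Nonempty) (x : E) : infDist x F ^ 2 ≤ wf hF x := by
  have h1 := Phi_ge hF ((4:ℝ) • x) x
  have h2 := cf_eq hF x
  have h3 := inner_four_smul x
  unfold wf
  nlinarith [sq_nonneg ‖x - Mf hF ((4:ℝ) • x)‖]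

lemma wf_eq (hF : F.Nonempty) (x : E) :
    wf hF x = infDist (Mf hF ((4:ℝ) • x)) F ^ 2 - 2 * ‖x - Mf hF ((4:ℝ) • x)‖ ^ 2 := by
  set m := Mf hF ((4:ℝ) • x)
  have h1 := Phi_eq hF ((4:ℝ) • x)
  have h2 := cf_eq hF m
  have h3 : ⟪(4:ℝ) • x, m⟫ = 4 * ⟪x, m⟫ := real_inner_smul_left x m 4
  have h4 : ‖x - m‖ ^ 2 = ‖x‖ ^ 2 - 2 * ⟪x, m⟫ + ‖m‖ ^ 2 := norm_sub_sq_real x m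
  unfold wf
  rw [h1, h3]
  linarith

lemma dist_Mf_le (hF : F.Nonempty) (x : E) :
    infDist (Mf hF ((4:ℝ) • x)) F ≤ infDist x F + ‖x - Mf hF ((4:ℝ) • x)‖ := by
  have := infDist_le_infDist_add_dist (x := Mf hF ((4:ℝ) • x)) (y := x) (s := F)
  rwa [dist_eq_norm, norm_sub_rev] at this

lemma wf_le (hF : F.Nonempty) (x : E) : wf hF x ≤ 2 * infDist x F ^ 2 := by
  have h1 := wf_eq hF x
  have h2 := dist_Mf_le hF x
  have h3 : (0:ℝ) ≤ infDist (Mf hF ((4:ℝ) • x)) F := infDist_nonneg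
  have h4 : (0:ℝ) ≤ infDist x F := infDist_nonneg
  have h5 : (0:ℝ) ≤ ‖x - Mf hF ((4:ℝ) • x)‖ := norm_nonneg _
  nlinarith [sq_nonneg (infDist x F - ‖x - Mf hF ((4:ℝ) • x)‖)]

lemma Mf_close (hF : F.Nonempty) (x : E) :
    ‖x - Mf hF ((4:ℝ) • x)‖ ≤ 2 * infDist x F := by
  set s := ‖x - Mf hF ((4:ℝ) • x)‖ with hs
  have h1 := wf_ge hF x
  have h2 := wf_eq hF x
  have h3 := dist_Mf_le hF x
  have h4 : (0:ℝ) ≤ s := norm_nonneg _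
  have h5 : (0:ℝ) ≤ infDist (Mf hF ((4:ℝ) • x)) F := infDist_nonneg
  have hkey : s ^ 2 ≤ 2 * infDist x F * s := by nlinarith
  rcases eq_or_lt_of_le h4 with h | h
  · rw [← h]
    have := Metric.infDist_nonneg (s := F) (x := x)
    linarith
  · have : s * s ≤ 2 * infDist x F * s := by nlinarith
    exact le_of_mul_le_mul_right this h

lemma wf_hasFDerivAt (hF : F.Nonempty) (x : E) :
    HasFDerivAt (wf hF)
      (innerSL ℝ ((4:ℝ) • Mf hF ((4:ℝ) • x) - (4:ℝ) • x)) x := by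
  have h1 : HasFDerivAt (fun y : E => (4:ℝ) • y)
      ((4:ℝ) • ContinuousLinearMap.id ℝ E) x := (hasFDerivAt_id x).const_smul (4:ℝ)
  have h2 := (hasFDerivAt_Phi hF ((4:ℝ) • x)).comp x h1
  have h3 : HasFDerivAt (fun y : E => 2 * ‖y‖ ^ 2)
      ((2:ℝ) • (2 • (innerSL ℝ x).comp (ContinuousLinearMap.id ℝ E))) x :=
    ((hasFDerivAt_id x).norm_sq).const_mul 2
  have h4 := h2.sub h3
  have heq : (fun y : E => Phi hF ((4:ℝ) • y) - 2 * ‖y‖ ^ 2) = wf hF := rfl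
  refine h4.congr_fderiv ?_
  ext v
  simp only [ContinuousLinearMap.coe_sub', Pi.sub_apply, ContinuousLinearMap.coe_comp',
    Function.comp_apply, ContinuousLinearMap.coe_smul', Pi.smul_apply,
    ContinuousLinearMap.coe_id', id_eq, innerSL_apply_apply, smul_eq_mul]
  rw [inner_sub_left, inner_smul_right, real_inner_smul_left, real_inner_smul_left]
  ring

lemma wf_fderiv_norm_le (hF : F.Nonempty) (x : E) :
    ‖fderiv ℝ (wf hF) x‖ ≤ 8 * infDist x F := by
  rw [(wf_hasFDerivAt hF x).fderiv]
  have h1 : (4:ℝ) • Mf hF ((4:ℝ) • x) - (4:ℝ) • x = -((4:ℝ) • (x - Mf hF ((4:ℝ) • x))) := by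
    rw [smul_sub]; abel
  rw [innerSL_apply_norm, h1, norm_neg, norm_smul]
  have := Mf_close hF x
  simp only [Real.norm_eq_abs]
  rw [abs_of_nonneg (by norm_num : (0:ℝ) ≤ (4:ℝ))]
  linarith

lemma deriv_smoothTransition_of_neg {s : ℝ} (h : s < 0) :
    deriv Real.smoothTransition s = 0 := by
  have he : Real.smoothTransition =ᶠ[𝓝 s] fun _ => (0:ℝ) := by
    filter_upwards [Iio_mem_nhds h] with r hr
    exact Real.smoothTransition.zero_of_nonpos (le_of_lt hr)
  rw [he.deriv_eq]
  exact deriv_const s 0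

lemma deriv_smoothTransition_of_gt {s : ℝ} (h : 1 < s) :
    deriv Real.smoothTransition s = 0 := by
  have he : Real.smoothTransition =ᶠ[𝓝 s] fun _ => (1:ℝ) := by
    filter_upwards [Ioi_mem_nhds h] with r hr
    exact Real.smoothTransition.one_of_one_le (le_of_lt hr)
  rw [he.deriv_eq]
  exact deriv_const s 1

lemma transition_deriv_bound :
    ∃ K : ℝ, 0 ≤ K ∧ ∀ s : ℝ, |deriv Real.smoothTransition s| ≤ K := by
  have hcont : Continuous (deriv Real.smoothTransition) :=
    (Real.smoothTransition.contDiff (n := 1)).continuous_deriv le_rfl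
  obtain ⟨K, hK⟩ := (isCompact_Icc (a := (0:ℝ)) (b := 1)).bddAbove_image
    ((continuous_abs.comp hcont).continuousOn)
  have hKb : ∀ s ∈ Set.Icc (0:ℝ) 1, |deriv Real.smoothTransition s| ≤ K := fun s hs =>
    hK (Set.mem_image_of_mem _ hs)
  have hK0 : 0 ≤ K := le_trans (abs_nonneg _) (hKb 0 ⟨le_rfl, zero_le_one⟩)
  refine ⟨K, hK0, fun s => ?_⟩
  by_cases h0 : s < 0
  · rw [deriv_smoothTransition_of_neg h0]; simpa using hK0
  · by_cases h1 : 1 < s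
    · rw [deriv_smoothTransition_of_gt h1]; simpa using hK0
    · exact hKb s ⟨not_lt.1 h0, not_lt.1 h1⟩

/-- A `C¹` Urysohn-type function for a closed set in a Hilbert space. -/
lemma smooth_urysohn {F : Set E} (hF : F.Nonempty) {ε : ℝ} (hε : 0 < ε) :
    ∃ u : E → ℝ, Differentiable ℝ u ∧ (∀ z, 0 ≤ u z) ∧ (∀ z, u z ≤ 1) ∧
      (∀ z ∈ F, u z = 1) ∧ (∀ z, ε ≤ infDist z F → u z = 0) ∧
      BddAbove (Set.range fun x => ‖fderiv ℝ u x‖) := by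
  obtain ⟨K, hK0, hK⟩ := transition_deriv_bound
  set T := Real.smoothTransition with hT
  set u : E → ℝ := fun x => T (2 - 2 / ε ^ 2 * wf hF x) with hu
  have hder : ∀ x : E, HasFDerivAt u
      ((deriv T (2 - 2 / ε ^ 2 * wf hF x)) •
        ((-(2 / ε ^ 2)) • innerSL ℝ ((4:ℝ) • Mf hF ((4:ℝ) • x) - (4:ℝ) • x))) x := by
    intro x
    have hin : HasFDerivAt (fun x : E => 2 - 2 / ε ^ 2 * wf hF x)
        ((-(2 / ε ^ 2)) • innerSL ℝ ((4:ℝ) • Mf hF ((4:ℝ) • x) - (4:ℝ) • x)) x := by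
      have h5 := ((wf_hasFDerivAt hF x).const_mul (2 / ε ^ 2)).const_sub 2
      refine h5.congr_fderiv ?_
      rw [neg_smul]
    have hT' : HasDerivAt T (deriv T (2 - 2 / ε ^ 2 * wf hF x)) (2 - 2 / ε ^ 2 * wf hF x) :=
      ((Real.smoothTransition.contDiff (n := 1)).differentiable (by simp) _).hasDerivAt
    exact hT'.comp_hasFDerivAt x hin
  refine ⟨u, fun x => (hder x).differentiableAt, ?_, ?_, ?_, ?_, ?_⟩
  · intro z; exact Real.smoothTransition.nonneg _
  · intro z; exact Real.smoothTransition.le_one _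
  · intro z hz
    have hd : infDist z F = 0 := infDist_zero_of_mem hz
    have h1 := wf_ge hF z
    have h2 := wf_le hF z
    rw [hd] at h1 h2
    have hw : wf hF z = 0 := by nlinarith
    show T (2 - 2 / ε ^ 2 * wf hF z) = 1
    rw [hw]
    apply Real.smoothTransition.one_of_one_le
    norm_num
  · intro z hz
    have h1 := wf_ge hF z
    have h2 : ε ^ 2 ≤ wf hF z := by nlinarith [infDist_nonneg (s := F) (x := z)]
    show T (2 - 2 / ε ^ 2 * wf hF z) = 0
    apply Real.smoothTransition.zero_of_nonpos
    have h3 : 2 / ε ^ 2 * ε ^ 2 ≤ 2 / ε ^ 2 * wf hF z := by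
      apply mul_le_mul_of_nonneg_left h2
      positivity
    rw [div_mul_cancel₀] at h3
    · linarith
    · positivity
  · refine ⟨32 * K / ε, ?_⟩
    rintro r ⟨x, rfl⟩
    show ‖fderiv ℝ u x‖ ≤ 32 * K / ε
    rw [(hder x).fderiv]
    have hrw : (4:ℝ) • Mf hF ((4:ℝ) • x) - (4:ℝ) • x = -((4:ℝ) • (x - Mf hF ((4:ℝ) • x))) := by
      rw [smul_sub]; abel
    rw [hrw]
    simp only [norm_smul, norm_neg, innerSL_apply_norm, Real.norm_eq_abs, abs_neg]
    rw [abs_of_nonneg (by positivity : (0:ℝ) ≤ 2 / ε ^ 2),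
      abs_of_nonneg (by norm_num : (0:ℝ) ≤ (4:ℝ))]
    by_cases hcase : wf hF x ≤ 2 * ε ^ 2
    · have hd2 : infDist x F ^ 2 ≤ 2 * ε ^ 2 := le_trans (wf_ge hF x) hcase
      have hd : infDist x F ≤ 2 * ε := by
        nlinarith [infDist_nonneg (s := F) (x := x)]
      have hs : ‖x - Mf hF ((4:ℝ) • x)‖ ≤ 4 * ε := le_trans (Mf_close hF x) (by linarith)
      have hderb := hK (2 - 2 / ε ^ 2 * wf hF x)
      have hnn : (0:ℝ) ≤ ‖x - Mf hF ((4:ℝ) • x)‖ := norm_nonneg _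
      calc |deriv T (2 - 2 / ε ^ 2 * wf hF x)| * (2 / ε ^ 2 * (4 * ‖x - Mf hF ((4:ℝ) • x)‖))
          ≤ K * (2 / ε ^ 2 * (4 * (4 * ε))) := by
            apply mul_le_mul hderb _ (by positivity) hK0
            apply mul_le_mul_of_nonneg_left _ (by positivity)
            linarith
        _ = 32 * K / ε := by field_simp; ring
    · have hneg : 2 - 2 / ε ^ 2 * wf hF x < 0 := by
        have h4 : 2 / ε ^ 2 * (2 * ε ^ 2) < 2 / ε ^ 2 * wf hF x := by
          apply mul_lt_mul_of_pos_left (by linarith) (by positivity)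
        rw [show 2 / ε ^ 2 * (2 * ε ^ 2) = 4 * (ε ^ 2 / ε ^ 2) by ring,
          div_self (by positivity : (ε:ℝ) ^ 2 ≠ 0)] at h4
        linarith
      rw [deriv_smoothTransition_of_neg hneg]
      simp only [abs_zero, zero_mul]
      positivity

end Urysohn
end StrongFellerAux

/-- A Markov transition semigroup `{P_t}` on a Hilbert
space `E` is strong Feller (it maps bounded Borel functions to bounded
continuous functions for every `t > 0`) provided that for every `φ : E → ℝ`
with `‖φ‖_∞` and `‖∇φ‖_∞` finite one has
`‖∇(P_t φ)(x)‖ ≤ C(‖x‖) ‖φ‖_∞` for all `x ∈ E`, where `C : ℝ⁺ → ℝ` is a fixed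
nondecreasing function. -/
theorem strong_feller_criterion
    (E : Type*) [NormedAddCommGroup E] [InnerProductSpace ℝ E] [CompleteSpace E]
    [MeasurableSpace E] [BorelSpace E]
    (P : ℝ → Kernel E E)
    (hMarkov : ∀ t : ℝ, 0 ≤ t → IsMarkovKernel (P t))
    (hP0 : P 0 = Kernel.id)
    (hCK : ∀ s t : ℝ, 0 ≤ s → 0 ≤ t → P (s + t) = (P s) ∘ₖ (P t))
    (C : ℝ → ℝ) (hC : Monotone C)
    (hgrad : ∀ t : ℝ, 0 < t → ∀ φ : E → ℝ, Measurable φ →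
      BddAbove (Set.range fun x => |φ x|) →
      Differentiable ℝ φ →
      BddAbove (Set.range fun x => ‖fderiv ℝ φ x‖) →
      Differentiable ℝ (fun x => ∫ y, φ y ∂(P t x)) ∧
      ∀ x : E, ‖fderiv ℝ (fun x' => ∫ y, φ y ∂(P t x')) x‖ ≤
        C ‖x‖ * supNorm φ) :
    -- strong Feller: `P_t` maps bounded Borel functions into `C_b(E)`
    ∀ t : ℝ, 0 < t → ∀ φ : E → ℝ, Measurable φ →
      BddAbove (Set.range fun x => |φ x|) →
      Continuous fun x => ∫ y, φ y ∂(P t x) := by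
  intro t ht φ hφm hφb
  haveI := hMarkov t ht.le
  haveI : Nonempty E := ⟨0⟩
  -- basic facts about `supNorm`
  have supNorm_nonneg : ∀ ψ : E → ℝ, BddAbove (Set.range fun x => |ψ x|) → 0 ≤ supNorm ψ := by
    intro ψ hb
    exact le_trans (abs_nonneg (ψ 0)) (le_ciSup hb 0)
  have habs : ∀ z, |φ z| ≤ supNorm φ := fun z => le_ciSup hφb z
  have hM0 : 0 ≤ supNorm φ := supNorm_nonneg φ hφb
  -- `C` is nonnegative on nonnegative reals
  have hC0 : ∀ r : ℝ, 0 ≤ r → 0 ≤ C r := by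
    have h1 := hgrad t ht (fun _ => 1) measurable_const
      ⟨1, by rintro r ⟨z, rfl⟩; simp⟩ (differentiable_const 1)
      ⟨0, by rintro r ⟨z, rfl⟩; simp⟩
    have hsup1 : supNorm (fun _ : E => (1:ℝ)) = 1 := by
      unfold supNorm
      simp [ciSup_const]
    intro r hr
    have h2 := h1.2 0
    rw [hsup1, norm_zero] at h2
    have h3 : (0:ℝ) ≤ C 0 * 1 := le_trans (norm_nonneg _) h2
    have h4 : C 0 ≤ C r := hC hr
    linarith
  -- Step 1: Lipschitz estimate for smooth bounded test functions
  have step1 : ∀ u : E → ℝ, Measurable u → BddAbove (Set.range fun x => |u x|) →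
      Differentiable ℝ u → BddAbove (Set.range fun x => ‖fderiv ℝ u x‖) → supNorm u ≤ 1 →
      ∀ x y : E, |(∫ z, u z ∂(P t x)) - ∫ z, u z ∂(P t y)| ≤ C (max ‖x‖ ‖y‖) * ‖x - y‖ := by
    intro u hm hb hd hgb hsup x y
    obtain ⟨hdiff, hbound⟩ := hgrad t ht u hm hb hd hgb
    set R := max ‖x‖ ‖y‖ with hR
    have hR0 : 0 ≤ R := le_trans (norm_nonneg x) (le_max_left _ _)
    have hCR : 0 ≤ C R := hC0 R hR0
    have hsupu0 : 0 ≤ supNorm u := supNorm_nonneg u hb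
    have hmean := (convex_closedBall (0:E) R).norm_image_sub_le_of_norm_fderiv_le
      (f := fun x' => ∫ z, u z ∂(P t x')) (C := C R * supNorm u)
      (fun z _ => hdiff z)
      (fun z hz => by
        have h5 := hbound z
        have h6 : C ‖z‖ ≤ C R := hC (mem_closedBall_zero_iff.1 hz)
        exact le_trans h5 (mul_le_mul_of_nonneg_right h6 hsupu0))
      (mem_closedBall_zero_iff.2 (le_max_left _ _))
      (mem_closedBall_zero_iff.2 (le_max_right _ _))
    rw [Real.norm_eq_abs] at hmean
    rw [abs_sub_comm]
    calc |(∫ z, u z ∂(P t y)) - ∫ z, u z ∂(P t x)|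
        ≤ C R * supNorm u * ‖y - x‖ := hmean
      _ ≤ C R * ‖x - y‖ := by
          rw [norm_sub_rev y x]
          have : C R * supNorm u ≤ C R := by
            nlinarith
          exact mul_le_mul_of_nonneg_right this (norm_nonneg _)
  -- Step 2: total-variation-type estimate on sets
  have step2 : ∀ x y : E, ∀ A : Set E, MeasurableSet A →
      |((P t x) A).toReal - ((P t y) A).toReal| ≤ C (max ‖x‖ ‖y‖) * ‖x - y‖ := by
    intro x y A hA
    set μ := P t x with hμ
    set ν := P t y with hν
    set K := C (max ‖x‖ ‖y‖) * ‖x - y‖ with hK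
    have hK0 : 0 ≤ K := mul_nonneg (hC0 _ (le_trans (norm_nonneg x) (le_max_left _ _)))
      (norm_nonneg _)
    refine le_of_forall_pos_le_add fun δ hδ => ?_
    set ρ := μ + ν with hρ
    set δ' := ENNReal.ofReal (δ / 5) with hδ'
    have hδ'0 : δ' ≠ 0 := by
      simp only [hδ', ne_eq, ENNReal.ofReal_eq_zero, not_le]
      positivity
    obtain ⟨F, hFA, hFc, hFlt⟩ := hA.exists_isClosed_lt_add (measure_ne_top ρ A) hδ'0
    -- auxiliary: compare measures of nested sets
    have hsub : ∀ S U : Set E, U ⊆ S → MeasurableSet S → MeasurableSet U →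
        ρ S < ρ U + δ' →
        (μ S).toReal ≤ (μ U).toReal + δ / 5 ∧ (ν S).toReal ≤ (ν U).toReal + δ / 5 := by
      intro S U hUS hSm hUm hlt
      have hdisj : ρ U + ρ (S \ U) = ρ S := by
        rw [measure_add_diff hUm.nullMeasurableSet S, Set.union_eq_self_of_subset_left hUS]
      have hρdiff : ρ (S \ U) < δ' := by
        rw [← hdisj] at hlt
        exact lt_of_add_lt_add_left hlt
      have hcore : ∀ m : Measure E, m (S \ U) ≤ ρ (S \ U) → IsFiniteMeasure m →
          (m S).toReal ≤ (m U).toReal + δ / 5 := by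
        intro m hm _
        have h1 : m S ≤ m U + m (S \ U) := by
          calc m S = m (U ∪ S \ U) := by rw [Set.union_diff_cancel hUS]
            _ ≤ m U + m (S \ U) := measure_union_le _ _
        have h2 : m (S \ U) ≤ δ' := le_trans hm hρdiff.le
        have h3 : m S ≤ m U + δ' := le_trans h1 (add_le_add_right h2 _)
        have h4 := ENNReal.toReal_mono (by finiteness) h3
        rwa [ENNReal.toReal_add (measure_ne_top m U) (by simp [hδ']),
          ENNReal.toReal_ofReal (by positivity)] at h4
      have hρapp : ρ (S \ U) = μ (S \ U) + ν (S \ U) := by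
        rw [hρ, Measure.add_apply]
      constructor
      · exact hcore μ (by rw [hρapp]; exact le_self_add) inferInstance
      · exact hcore ν (by rw [hρapp]; exact le_add_self) inferInstance
    rcases Set.eq_empty_or_nonempty F with hFe | hFne
    · -- the inner closed set is empty: both measures of `A` are tiny
      subst hFe
      have h1 := hsub A ∅ (Set.empty_subset A) hA MeasurableSet.empty hFlt
      simp only [measure_empty, ENNReal.toReal_zero, zero_add] at h1
      rw [abs_le]
      constructor
      · have := ENNReal.toReal_nonneg (a := μ A)
        have := ENNReal.toReal_nonneg (a := ν A)
        linarith [h1.1, h1.2]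
      · have := ENNReal.toReal_nonneg (a := μ A)
        have := ENNReal.toReal_nonneg (a := ν A)
        linarith [h1.1, h1.2]
    · -- the main case: smooth Urysohn function between `F` and its neighbourhood
      set N : ℕ → Set E := fun n => {z | Metric.infDist z F < 1 / (n + 1)} with hN
      have hNopen : ∀ n, IsOpen (N n) :=
        fun n => isOpen_lt (Metric.continuous_infDist_pt F) continuous_const
      have hNanti : Antitone N := by
        intro a b hab z hz
        simp only [hN, Set.mem_setOf_eq] at hz ⊢
        have hcast : (a:ℝ) ≤ (b:ℝ) := Nat.cast_le.2 hab
        have hba : 1 / ((b:ℝ) + 1) ≤ 1 / ((a:ℝ) + 1) :=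
          one_div_le_one_div_of_le (by positivity) (by linarith)
        linarith
      have hNinter : ⋂ n, N n = F := by
        ext z
        simp only [Set.mem_iInter, hN, Set.mem_setOf_eq]
        constructor
        · intro hz
          have hz0 : Metric.infDist z F ≤ 0 := by
            by_contra hpos
            push_neg at hpos
            obtain ⟨n, hn⟩ := exists_nat_one_div_lt hpos
            exact absurd (hz n) (not_lt.2 (by exact_mod_cast hn.le))
          have := Metric.infDist_nonneg (s := F) (x := z)
          exact (hFc.mem_iff_infDist_zero hFne).2 (le_antisymm hz0 this)
        · intro hz n
          rw [Metric.infDist_zero_of_mem hz]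
          positivity
      have htend : Tendsto (ρ ∘ N) atTop (𝓝 (ρ F)) := by
        have h7 : Tendsto (ρ ∘ N) atTop (𝓝 (ρ (⋂ n, N n))) :=
          tendsto_measure_iInter_atTop
            (fun n => ((hNopen n).measurableSet).nullMeasurableSet) hNanti
            ⟨0, measure_ne_top ρ _⟩
        rwa [hNinter] at h7
      have hlt : ρ F < ρ F + δ' := ENNReal.lt_add_right (measure_ne_top ρ F) hδ'0
      obtain ⟨n, hn⟩ := (htend.eventually_lt_const hlt).exists
      have hεn : (0:ℝ) < 1 / (n + 1) := by positivity
      obtain ⟨u, hud, hu0, hu1, huF, huN, hugb⟩ := StrongFellerAux.smooth_urysohn (F := F) hFne hεn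
      have huabs : ∀ z, |u z| ≤ 1 := fun z => abs_le.2 ⟨by linarith [hu0 z], hu1 z⟩
      have hum : Measurable u := hud.continuous.measurable
      have hub : BddAbove (Set.range fun z => |u z|) := by
        refine ⟨1, ?_⟩
        rintro r ⟨z, rfl⟩
        exact huabs z
      have hsupu : supNorm u ≤ 1 := ciSup_le huabs
      have hest := step1 u hum hub hud hugb hsupu x y
      -- integrability
      have hint : ∀ m : Measure E, IsProbabilityMeasure m → Integrable u m := by
        intro m _
        refine (integrable_const (1:ℝ)).mono' hum.aestronglyMeasurable ?_
        filter_upwards with z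
        rw [Real.norm_eq_abs]
        exact huabs z
      have hintμ : Integrable u μ := hint μ inferInstance
      have hintν : Integrable u ν := hint ν inferInstance
      have hFN : F ⊆ N n := by
        intro z hz
        simp only [hN, Set.mem_setOf_eq]
        rw [Metric.infDist_zero_of_mem hz]
        exact hεn
      -- indicator comparisons
      have hcomp : ∀ m : Measure E, IsProbabilityMeasure m → Integrable u m →
          (m F).toReal ≤ ∫ z, u z ∂m ∧ (∫ z, u z ∂m) ≤ (m (N n)).toReal := by
        intro m _ hintm
        constructor
        · rw [← measureReal_def, ← integral_indicator_one hFc.measurableSet]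
          apply integral_mono ((integrable_const (1:ℝ)).indicator hFc.measurableSet) hintm
          intro z
          by_cases hz : z ∈ F
          · rw [Set.indicator_of_mem hz]
            exact (huF z hz).ge
          · rw [Set.indicator_of_notMem hz]
            exact hu0 z
        · rw [← measureReal_def, ← integral_indicator_one (hNopen n).measurableSet]
          apply integral_mono hintm
            ((integrable_const (1:ℝ)).indicator (hNopen n).measurableSet)
          intro z
          by_cases hz : z ∈ N n
          · rw [Set.indicator_of_mem hz]
            exact hu1 z
          · rw [Set.indicator_of_notMem hz]
            have : 1 / ((n:ℝ) + 1) ≤ Metric.infDist z F := by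
              simp only [hN, Set.mem_setOf_eq, not_lt] at hz
              exact hz
            rw [huN z this]
      have hcompμ := hcomp μ inferInstance hintμ
      have hcompν := hcomp ν inferInstance hintν
      have hNsub := hsub (N n) F hFN (hNopen n).measurableSet hFc.measurableSet hn
      have hAsub := hsub A F hFA hA hFc.measurableSet hFlt
      have hFA' : (μ F).toReal ≤ (μ A).toReal ∧ (ν F).toReal ≤ (ν A).toReal :=
        ⟨ENNReal.toReal_mono (measure_ne_top μ A) (measure_mono hFA),
         ENNReal.toReal_mono (measure_ne_top ν A) (measure_mono hFA)⟩
      have habs' := abs_le.1 hest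
      rw [abs_le]
      constructor
      · linarith [hAsub.1, hAsub.2, hNsub.1, hNsub.2, hcompμ.1, hcompμ.2,
          hcompν.1, hcompν.2, hFA'.1, hFA'.2, habs'.1, habs'.2]
      · linarith [hAsub.1, hAsub.2, hNsub.1, hNsub.2, hcompμ.1, hcompμ.2,
          hcompν.1, hcompν.2, hFA'.1, hFA'.2, habs'.1, habs'.2]
  -- Step 3: layer-cake argument extends the estimate to all bounded measurable functions
  have step3 : ∀ x y : E, |(∫ z, φ z ∂(P t x)) - ∫ z, φ z ∂(P t y)| ≤
      2 * supNorm φ * (C (max ‖x‖ ‖y‖) * ‖x - y‖) := by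
    intro x y
    set μ := P t x with hμ
    set ν := P t y with hν
    set M := supNorm φ with hMdef
    set K := C (max ‖x‖ ‖y‖) * ‖x - y‖ with hK
    have hK0 : 0 ≤ K := mul_nonneg (hC0 _ (le_trans (norm_nonneg x) (le_max_left _ _)))
      (norm_nonneg _)
    set g : E → ℝ := fun z => φ z + M with hg
    have hg0 : ∀ z, 0 ≤ g z := fun z => by
      have := (abs_le.1 (habs z)).1
      simp only [hg]
      linarith
    have hg2 : ∀ z, g z ≤ 2 * M := fun z => by
      have := (abs_le.1 (habs z)).2
      simp only [hg]
      linarith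
    have hgm : Measurable g := hφm.add_const M
    have hintφ : ∀ m : Measure E, IsProbabilityMeasure m → Integrable φ m := by
      intro m _
      refine (integrable_const M).mono' hφm.aestronglyMeasurable ?_
      filter_upwards with z
      rw [Real.norm_eq_abs]
      exact habs z
    have hintφμ : Integrable φ μ := hintφ μ inferInstance
    have hintφν : Integrable φ ν := hintφ ν inferInstance
    have hintgμ : Integrable g μ := hintφμ.add (integrable_const M)
    have hintgν : Integrable g ν := hintφν.add (integrable_const M)
    -- difference of φ-integrals equals difference of g-integrals
    have hdiffint : (∫ z, φ z ∂μ) - ∫ z, φ z ∂ν = (∫ z, g z ∂μ) - ∫ z, g z ∂ν := by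
      simp only [hg]
      rw [integral_add hintφμ (integrable_const M), integral_add hintφν (integrable_const M)]
      simp [measure_univ]
    -- layer cake
    have hlayμ := hintgμ.integral_eq_integral_meas_lt (ae_of_all μ hg0)
    have hlayν := hintgν.integral_eq_integral_meas_lt (ae_of_all ν hg0)
    simp only [measureReal_def] at hlayμ hlayν
    set hm : Measure E → ℝ → ℝ := fun m s => (m {a | s < g a}).toReal with hhm
    have hzero : ∀ s : ℝ, 2 * M ≤ s → {a : E | s < g a} = ∅ := by
      intro s hs
      ext a
      simp only [Set.mem_setOf_eq, Set.mem_empty_iff_false, iff_false, not_lt]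
      exact le_trans (hg2 a) hs
    have hmono : ∀ m : Measure E, IsProbabilityMeasure m → Antitone (hm m) := by
      intro m _ s1 s2 h
      apply ENNReal.toReal_mono (measure_ne_top m _)
      apply measure_mono
      intro a ha
      exact lt_of_le_of_lt h ha
    have hmmeas : ∀ m : Measure E, IsProbabilityMeasure m → Measurable (hm m) :=
      fun m hmp => (hmono m hmp).measurable
    have hmbd : ∀ m : Measure E, IsProbabilityMeasure m → ∀ s, |hm m s| ≤ 1 := by
      intro m _ s
      rw [abs_of_nonneg ENNReal.toReal_nonneg]
      rw [show (1:ℝ) = (1:ℝ≥0∞).toReal by simp]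
      exact ENNReal.toReal_mono ENNReal.one_ne_top prob_le_one
    have hIoc : Set.Ioc (0:ℝ) (2*M) ∪ Set.Ioi (2*M) = Set.Ioi 0 :=
      Set.Ioc_union_Ioi_eq_Ioi (by linarith)
    have hrestr : ∀ m : Measure E, IsProbabilityMeasure m →
        (∫ s in Set.Ioi (0:ℝ), hm m s) = ∫ s in Set.Ioc (0:ℝ) (2*M), hm m s := by
      intro m hmp
      have hconst1 : IntegrableOn (fun _ : ℝ => (1:ℝ)) (Set.Ioc (0:ℝ) (2*M)) volume :=
        integrableOn_const (by rw [Real.volume_Ioc]; exact ENNReal.ofReal_ne_top)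
      have hion : IntegrableOn (hm m) (Set.Ioc (0:ℝ) (2*M)) volume := by
        refine hconst1.mono' ((hmmeas m hmp).aestronglyMeasurable) ?_
        filter_upwards with s
        rw [Real.norm_eq_abs]
        exact hmbd m hmp s
      have hzeroIoi : Set.EqOn (hm m) (fun _ => (0:ℝ)) (Set.Ioi (2*M)) := by
        intro s hs
        simp only [hhm]
        rw [hzero s (le_of_lt hs)]
        simp
      have hion2 : IntegrableOn (hm m) (Set.Ioi (2*M)) volume := by
        rw [integrableOn_congr_fun hzeroIoi measurableSet_Ioi]
        exact integrableOn_zero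
      rw [← hIoc, setIntegral_union (Set.Ioc_disjoint_Ioi le_rfl) measurableSet_Ioi hion hion2]
      rw [setIntegral_congr_fun measurableSet_Ioi hzeroIoi]
      simp
    have hconst1 : IntegrableOn (fun _ : ℝ => (1:ℝ)) (Set.Ioc (0:ℝ) (2*M)) volume :=
      integrableOn_const (by rw [Real.volume_Ioc]; exact ENNReal.ofReal_ne_top)
    have hionμ : IntegrableOn (hm μ) (Set.Ioc (0:ℝ) (2*M)) volume := by
      refine hconst1.mono' ((hmmeas μ inferInstance).aestronglyMeasurable) ?_
      filter_upwards with s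
      rw [Real.norm_eq_abs]
      exact hmbd μ inferInstance s
    have hionν : IntegrableOn (hm ν) (Set.Ioc (0:ℝ) (2*M)) volume := by
      refine hconst1.mono' ((hmmeas ν inferInstance).aestronglyMeasurable) ?_
      filter_upwards with s
      rw [Real.norm_eq_abs]
      exact hmbd ν inferInstance s
    have hsetbd : ∀ s : ℝ, |hm μ s - hm ν s| ≤ K := by
      intro s
      exact step2 x y {a | s < g a} (measurableSet_lt measurable_const hgm)
    calc |(∫ z, φ z ∂μ) - ∫ z, φ z ∂ν|
        = |∫ s in Set.Ioc (0:ℝ) (2*M), (hm μ s - hm ν s)| := by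
          rw [hdiffint, hlayμ, hlayν, hrestr μ inferInstance, hrestr ν inferInstance,
            integral_sub hionμ hionν]
      _ ≤ ∫ s in Set.Ioc (0:ℝ) (2*M), |hm μ s - hm ν s| := by
          rw [← Real.norm_eq_abs]
          refine le_trans (norm_integral_le_integral_norm _) ?_
          simp [Real.norm_eq_abs]
      _ ≤ ∫ s in Set.Ioc (0:ℝ) (2*M), K := by
          refine setIntegral_mono_on ((hionμ.sub hionν).abs) (integrableOn_const ?_)
            measurableSet_Ioc (fun s _ => hsetbd s)
          rw [Real.volume_Ioc]
          exact ENNReal.ofReal_ne_top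
      _ = 2 * M * K := by
          rw [setIntegral_const, Real.volume_real_Ioc_of_le (by linarith), smul_eq_mul]
          ring
  -- conclusion: local Lipschitz continuity
  rw [continuous_iff_continuousAt]
  intro x₀
  apply continuousAt_of_locally_lipschitz zero_lt_one (2 * supNorm φ * C (‖x₀‖ + 1))
  intro y hy
  have h1 := step3 y x₀
  have hymax : max ‖y‖ ‖x₀‖ ≤ ‖x₀‖ + 1 := by
    apply max_le
    · have h2 : ‖y‖ - ‖x₀‖ ≤ ‖y - x₀‖ := norm_sub_norm_le y x₀
      rw [dist_eq_norm] at hy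
      linarith
    · linarith
  have hCm : C (max ‖y‖ ‖x₀‖) ≤ C (‖x₀‖ + 1) := hC hymax
  rw [Real.dist_eq, dist_eq_norm]
  calc |(∫ z, φ z ∂(P t y)) - ∫ z, φ z ∂(P t x₀)|
      ≤ 2 * supNorm φ * (C (max ‖y‖ ‖x₀‖) * ‖y - x₀‖) := h1
    _ ≤ 2 * supNorm φ * (C (‖x₀‖ + 1) * ‖y - x₀‖) := by
        apply mul_le_mul_of_nonneg_left _ (by linarith)
        exact mul_le_mul_of_nonneg_right hCm (norm_nonneg _)
    _ = 2 * supNorm φ * C (‖x₀‖ + 1) * ‖y - x₀‖ := by ring
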